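/- Let x₁, x₂ be real numbers with 0 ≤ x₂ ≤ x₁ and let z be a real number with z·x₁ < 1 and z·x₂ < 1. Then ∫₀¹ 1 / ( √(t(1−t)) · (1 − z(x₂ + t(x₁−x₂))) ) dt = π / √((1−z·x₁)(1−z·x₂)). -/

import Mathlib

open MeasureTheory Set


lemma aux_int (a b : ℝ) (ha : 0 < a) (hb : 0 < b) :
    ∫ s in Ioi (0:ℝ), 2 / (a + b * s ^ 2) = Real.pi / Real.sqrt (a * b) := by
  have hab : 0 < Real.sqrt (a * b) := Real.sqrt_pos.2 (by positivity)
  have hba : 0 < Real.sqrt (b / a) := Real.sqrt_pos.2 (by positivity)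
  set c := Real.sqrt (b / a) with hc
  set g : ℝ → ℝ := fun s => (2 / Real.sqrt (a * b)) * Real.arctan (c * s) with hg
  have hc2 : c ^ 2 = b / a := Real.sq_sqrt (by positivity)
  have hderiv : ∀ s : ℝ, HasDerivAt g (2 / (a + b * s ^ 2)) s := by
    intro s
    have h1 : HasDerivAt (fun s : ℝ => c * s) c s := by
      simpa using (hasDerivAt_id s).const_mul c
    have h2 := (Real.hasDerivAt_arctan (c * s)).comp s h1
    have h3 := h2.const_mul (2 / Real.sqrt (a * b))
    refine h3.congr_deriv (Eq.symm ?_)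
    have : (1 + (c*s)^2) = (a + b * s^2) / a := by
      rw [mul_pow, hc2]; field_simp
    rw [this]
    have hs2 : Real.sqrt (a*b) * Real.sqrt (b/a) = b := by
      rw [← Real.sqrt_mul (by positivity)]
      rw [show a * b * (b/a) = b^2 by field_simp]
      exact Real.sqrt_sq hb.le
    have hac : a * c = Real.sqrt (a * b) := by
      rw [hc, ← Real.sqrt_sq ha.le, ← Real.sqrt_mul (by positivity)]
      congr 1; field_simp; rw [Real.sq_sqrt (sq_nonneg a)]
    have hd : 0 < a + b * s ^ 2 := by positivity
    field_simp [← hac]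
    exact hac.symm
  have htend : Filter.Tendsto g Filter.atTop (nhds (Real.pi / Real.sqrt (a * b))) := by
    have h1 : Filter.Tendsto (fun s : ℝ => c * s) Filter.atTop Filter.atTop :=
      Filter.Tendsto.const_mul_atTop hba Filter.tendsto_id
    have h2 := (Real.tendsto_arctan_atTop.mono_right nhdsWithin_le_nhds).comp h1
    have h3 := h2.const_mul (2 / Real.sqrt (a * b))
    simp only [Function.comp] at h3
    convert h3 using 2
    field_simp
  have := integral_Ioi_of_hasDerivAt_of_nonneg' (g := g)
    (g' := fun s => 2 / (a + b * s ^ 2)) (a := 0)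
    (fun x _ => hderiv x)
    (fun x _ => by positivity) htend
  rw [this, hg]
  simp


lemma aux_psi_image : (fun s : ℝ => s^2 / (1 + s^2)) '' (Ioi 0) = Ioo (0:ℝ) 1 := by
  ext t
  constructor
  · rintro ⟨s, hs, rfl⟩
    have hs' : (0:ℝ) < s := hs
    constructor
    · positivity
    · rw [div_lt_one (by positivity)]; linarith
  · rintro ⟨ht0, ht1⟩
    refine ⟨Real.sqrt (t / (1 - t)), ?_, ?_⟩
    · exact Real.sqrt_pos.2 (by apply div_pos ht0; linarith)
    · have h1t : (0:ℝ) < 1 - t := by linarith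
      have hsq : Real.sqrt (t / (1 - t)) ^ 2 = t / (1 - t) :=
        Real.sq_sqrt (by positivity)
      simp only []
      rw [hsq]
      field_simp
      ring

lemma aux_psi_inj : InjOn (fun s : ℝ => s^2 / (1 + s^2)) (Ioi 0) := by
  intro s hs s' hs' h
  simp only at h
  have h1 : (0:ℝ) < 1 + s^2 := by positivity
  have h2 : (0:ℝ) < 1 + s'^2 := by positivity
  have hsq : s^2 = s'^2 := by
    field_simp at h; nlinarith
  have : (0:ℝ) < s := hs
  have : (0:ℝ) < s' := hs'
  nlinarith

lemma aux_psi_deriv (s : ℝ) :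
    HasDerivAt (fun s : ℝ => s^2 / (1 + s^2)) (2*s / (1 + s^2)^2) s := by
  have h1 : HasDerivAt (fun s : ℝ => s^2) (2*s) s := by
    simpa using hasDerivAt_pow 2 s
  have h2 : HasDerivAt (fun s : ℝ => 1 + s^2) (2*s) s := by
    simpa using h1.const_add 1
  have h3 := h1.div h2 (by positivity)
  refine h3.congr_deriv (Eq.symm ?_)
  field_simp
  ring

/-- `∫₀¹ dt/(√(t(1−t))(1−z(x₂+t(x₁−x₂)))) = π/√((1−zx₁)(1−zx₂))`. -/
theorem stmt_9 (x₁ x₂ z : ℝ) (h0 : 0 ≤ x₂) (h12 : x₂ ≤ x₁)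
    (hz₁ : z * x₁ < 1) (hz₂ : z * x₂ < 1) :
    ∫ t in Ioo (0 : ℝ) 1,
        1 / (Real.sqrt (t * (1 - t)) * (1 - z * (x₂ + t * (x₁ - x₂)))) =
      Real.pi / Real.sqrt ((1 - z * x₁) * (1 - z * x₂)) := by
  have hb : (0:ℝ) < 1 - z * x₁ := by linarith
  have ha : (0:ℝ) < 1 - z * x₂ := by linarith
  rw [← aux_psi_image,
    integral_image_eq_integral_abs_deriv_smul measurableSet_Ioi
      (fun s _ => (aux_psi_deriv s).hasDerivWithinAt) aux_psi_inj,
    show Real.pi / Real.sqrt ((1 - z*x₁)*(1 - z*x₂))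
        = Real.pi / Real.sqrt ((1 - z*x₂)*(1 - z*x₁)) by rw [mul_comm],
    ← aux_int (1 - z*x₂) (1 - z*x₁) ha hb]
  apply setIntegral_congr_fun measurableSet_Ioi
  intro s hs
  have hs' : (0:ℝ) < s := hs
  have h1 : (0:ℝ) < 1 + s^2 := by positivity
  simp only [smul_eq_mul]
  have hsqrt : Real.sqrt (s^2/(1+s^2) * (1 - s^2/(1+s^2))) = s / (1 + s^2) := by
    rw [show s^2/(1+s^2) * (1 - s^2/(1+s^2)) = (s/(1+s^2))^2 by field_simp; ring]
    exact Real.sqrt_sq (by positivity)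
  rw [hsqrt]
  have hden : 1 - z * (x₂ + s^2/(1+s^2) * (x₁ - x₂))
      = ((1 - z*x₂) + (1 - z*x₁) * s^2) / (1 + s^2) := by
    field_simp; ring
  rw [hden, abs_of_nonneg (by positivity)]
  have h2 : (0:ℝ) < (1 - z*x₂) + (1 - z*x₁) * s^2 := by positivity
  field_simp
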